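/- Let K be a commutative unital ring in which 2 and 3 are invertible and g a Lie algebra over K. Let f = (f_1 ⊆ f_0 ⊆ g) be a 3-filtration of g, and let e and e′ be 3-filtrations of g such that both (e, f) and (e′, f) are inner transversal pairs. Then there exists a unique x ∈ f_1 such that the automorphism e^{ad x} = id + ad(x) + (1/2)(ad x)^2 (well defined since (ad x)^3 = 0 for x ∈ f_1) maps e_1 onto e′_1 and e_0 onto e′_0. In other words, the vector group f_1 acts simply transitively on the set of inner 3-filtrations transversal to f. -/

import Mathlib

/-- A 3-filtration `f₁ ⊆ f₀ ⊆ g` of a Lie algebra. -/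
def Is3Filtration {K L : Type*} [CommRing K] [LieRing L] [LieAlgebra K L]
    (f₁ f₀ : Submodule K L) : Prop :=
  f₁ ≤ f₀ ∧ (∀ x ∈ f₁, ∀ y ∈ f₁, ⁅x, y⁆ = (0 : L)) ∧
    (∀ x ∈ f₀, ∀ y ∈ f₀, ⁅x, y⁆ ∈ f₀) ∧
    (∀ x ∈ f₁, ∀ y ∈ f₀, ⁅x, y⁆ ∈ f₁) ∧
    (∀ x : L, ∀ y ∈ f₁, ⁅x, y⁆ ∈ f₀)

/-- Two 3-filtrations `e`, `f` are transversal: `g = e₁ ⊕ f₀` and `g = e₀ ⊕ f₁`. -/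
def Transversal3 {K L : Type*} [CommRing K] [LieRing L] [LieAlgebra K L]
    (e₁ e₀ f₁ f₀ : Submodule K L) : Prop :=
  IsCompl e₁ f₀ ∧ IsCompl e₀ f₁

/-- A transversal pair `(e, f)` of 3-filtrations is inner: there is an Euler element. -/
def InnerPair3 {K L : Type*} [CommRing K] [LieRing L] [LieAlgebra K L]
    (e₁ e₀ f₁ f₀ : Submodule K L) : Prop :=
  ∃ E : L, (∀ x ∈ e₁, ⁅E, x⁆ = x) ∧ (∀ x ∈ e₀ ⊓ f₀, ⁅E, x⁆ = (0 : L)) ∧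
    (∀ x ∈ f₁, ⁅E, x⁆ = -x)

/-- `e^{ad x} = id + ad x + (1/2) (ad x)²`. -/
noncomputable def expAd (K : Type*) {L : Type*} [CommRing K] [LieRing L] [LieAlgebra K L]
    (x : L) : Module.End K L :=
  1 + LieAlgebra.ad K L x + Ring.inverse (2 : K) • (LieAlgebra.ad K L x) ^ 2

section
variable {K L : Type*} [CommRing K] [LieRing L] [LieAlgebra K L]

lemma expAd_apply (x z : L) :
    (expAd K x : L →ₗ[K] L) z = z + ⁅x, z⁆ + Ring.inverse (2 : K) • ⁅x, ⁅x, z⁆⁆ := by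
  simp [expAd, pow_two, Module.End.mul_apply, LieAlgebra.ad_apply]

lemma unit_smul_cancel {c : K} (hc : IsUnit c) {w : L} (h : c • w = 0) : w = 0 := by
  calc w = (Ring.inverse c * c) • w := by rw [Ring.inverse_mul_cancel c hc, one_smul]
  _ = Ring.inverse c • (c • w) := mul_smul _ _ _
  _ = 0 := by rw [h, smul_zero]

variable {f₁ f₀ : Submodule K L}

lemma lie_mem_f0 (hf : Is3Filtration f₁ f₀) {x : L} (hx : x ∈ f₁) (z : L) : ⁅x, z⁆ ∈ f₀ := by
  have h := f₀.neg_mem (hf.2.2.2.2 z x hx)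
  rw [← lie_skew z x, neg_neg] at h
  exact h

lemma lie2_mem_f1 (hf : Is3Filtration f₁ f₀) {x : L} (hx : x ∈ f₁) (z : L) :
    ⁅x, ⁅x, z⁆⁆ ∈ f₁ :=
  hf.2.2.2.1 x hx _ (lie_mem_f0 hf hx z)

lemma lie3_eq_zero (hf : Is3Filtration f₁ f₀) {x : L} (hx : x ∈ f₁) (z : L) :
    ⁅x, ⁅x, ⁅x, z⁆⁆⁆ = 0 :=
  hf.2.1 x hx _ (lie2_mem_f1 hf hx z)

lemma expAd_lie (h2 : IsUnit (2 : K)) (h3 : IsUnit (3 : K))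
    (hf : Is3Filtration f₁ f₀) {x : L} (hx : x ∈ f₁) (a b : L) :
    (expAd K x : L →ₗ[K] L) ⁅a, b⁆ = ⁅(expAd K x : L →ₗ[K] L) a, (expAd K x : L →ₗ[K] L) b⁆ := by
  set t := Ring.inverse (2 : K) with ht
  have e1 : ⁅x, ⁅a, b⁆⁆ = ⁅⁅x,a⁆, b⁆ + ⁅a, ⁅x,b⁆⁆ := leibniz_lie x a b
  have e2 : ⁅x, ⁅x, ⁅a, b⁆⁆⁆
      = ⁅⁅x,⁅x,a⁆⁆, b⁆ + ⁅⁅x,a⁆, ⁅x,b⁆⁆ + ⁅⁅x,a⁆, ⁅x,b⁆⁆ + ⁅a, ⁅x,⁅x,b⁆⁆⁆ := by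
    rw [e1, lie_add, leibniz_lie x ⁅x,a⁆ b, leibniz_lie x a ⁅x,b⁆]; abel
  have key3 : ⁅⁅x,⁅x,a⁆⁆, ⁅x,b⁆⁆ + ⁅⁅x,a⁆, ⁅x,⁅x,b⁆⁆⁆ = 0 := by
    have h0 := lie3_eq_zero hf hx ⁅a, b⁆
    rw [e2, lie_add, lie_add, lie_add, leibniz_lie x ⁅x,⁅x,a⁆⁆ b,
      leibniz_lie x ⁅x,a⁆ ⁅x,b⁆, leibniz_lie x a ⁅x,⁅x,b⁆⁆,
      lie3_eq_zero hf hx a, lie3_eq_zero hf hx b, zero_lie, lie_zero] at h0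
    have h3s : (3 : K) • (⁅⁅x,⁅x,a⁆⁆, ⁅x,b⁆⁆ + ⁅⁅x,a⁆, ⁅x,⁅x,b⁆⁆⁆) = 0 := by
      rw [show (3:K) = 1+1+1 by norm_num, add_smul, add_smul, one_smul]
      linear_combination (norm := abel) h0
    exact unit_smul_cancel h3 h3s
  have hzz : ⁅⁅x,⁅x,a⁆⁆, ⁅x,⁅x,b⁆⁆⁆ = 0 :=
    hf.2.1 _ (lie2_mem_f1 hf hx a) _ (lie2_mem_f1 hf hx b)
  have hv : t • ⁅⁅x,a⁆,⁅x,b⁆⁆ + t • ⁅⁅x,a⁆,⁅x,b⁆⁆ = ⁅⁅x,a⁆,⁅x,b⁆⁆ := by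
    rw [← add_smul]
    have : t + t = 1 := by
      rw [ht]
      calc Ring.inverse (2:K) + Ring.inverse 2 = Ring.inverse (2:K) * 2 := by ring
      _ = 1 := Ring.inverse_mul_cancel _ h2
    rw [this, one_smul]
  rw [expAd_apply, expAd_apply, expAd_apply, ← ht]
  simp only [add_lie, lie_add, smul_lie, lie_smul, smul_smul]
  linear_combination (norm := module) e1 + t • e2 - t • key3 - (t*t) • hzz + hv

end

section
variable {K L : Type*} [CommRing K] [LieRing L] [LieAlgebra K L] {f₁ f₀ : Submodule K L}

/-- `expAd` of elements of `f₁` compose additively. -/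
lemma expAd_comp (h2 : IsUnit (2 : K)) (hf : Is3Filtration f₁ f₀) {x y : L}
    (hx : x ∈ f₁) (hy : y ∈ f₁) :
    (expAd K x : L →ₗ[K] L).comp (expAd K y : L →ₗ[K] L) = (expAd K (x + y) : L →ₗ[K] L) := by
  ext z
  simp only [LinearMap.comp_apply, expAd_apply]
  set t := Ring.inverse (2 : K) with ht
  have hxy : ⁅x, y⁆ = 0 := hf.2.1 x hx y hy
  have hcomm : ⁅x, ⁅y, z⁆⁆ = ⁅y, ⁅x, z⁆⁆ := by
    rw [leibniz_lie x y z, hxy, zero_lie, zero_add]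
  have hA : ⁅x, ⁅x, ⁅y, z⁆⁆⁆ = 0 := by
    rw [hcomm, leibniz_lie x y ⁅x,z⁆, hxy, zero_lie, zero_add]
    exact hf.2.1 y hy _ (lie2_mem_f1 hf hx z)
  have hB : ⁅x, ⁅y, ⁅y, z⁆⁆⁆ = 0 := hf.2.1 x hx _ (lie2_mem_f1 hf hy z)
  have hadd1 : ⁅x + y, z⁆ = ⁅x, z⁆ + ⁅y, z⁆ := add_lie x y z
  have hadd2 : ⁅x + y, ⁅x + y, z⁆⁆ = ⁅x,⁅x,z⁆⁆ + ⁅x,⁅y,z⁆⁆ + ⁅x,⁅y,z⁆⁆ + ⁅y,⁅y,z⁆⁆ := by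
    rw [hadd1, lie_add, add_lie, add_lie, ← hcomm]; abel
  have L1 : ⁅x, z + ⁅y,z⁆ + t • ⁅y,⁅y,z⁆⁆⁆ = ⁅x,z⁆ + ⁅x,⁅y,z⁆⁆ := by
    rw [lie_add, lie_add, lie_smul, hB, smul_zero, add_zero]
  rw [hadd2, hadd1, L1, lie_add x ⁅x,z⁆ ⁅x,⁅y,z⁆⁆, hA, add_zero]
  have hone : t • ⁅x,⁅y,z⁆⁆ + t • ⁅x,⁅y,z⁆⁆ = ⁅x,⁅y,z⁆⁆ := by
    rw [← add_smul]
    have h1 : t + t = 1 := by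
      rw [ht]
      calc Ring.inverse (2:K) + Ring.inverse 2 = Ring.inverse (2:K) * 2 := by ring
      _ = 1 := Ring.inverse_mul_cancel _ h2
    rw [h1, one_smul]
  linear_combination (norm := module) -hone

lemma expAd_zero : (expAd K (0:L) : L →ₗ[K] L) = LinearMap.id := by
  ext z; simp [expAd_apply]

/-- `expAd x` for `x ∈ f₁` is bijective. -/
lemma expAd_leftInv (h2 : IsUnit (2 : K)) (hf : Is3Filtration f₁ f₀) {x : L} (hx : x ∈ f₁) :
    (expAd K (-x) : L →ₗ[K] L).comp (expAd K x : L →ₗ[K] L) = LinearMap.id := by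
  rw [expAd_comp h2 hf (f₁.neg_mem hx) hx, neg_add_cancel, expAd_zero]

lemma expAd_bijective (h2 : IsUnit (2 : K)) (hf : Is3Filtration f₁ f₀) {x : L} (hx : x ∈ f₁) :
    Function.Bijective (expAd K x : L →ₗ[K] L) := by
  constructor
  · intro a b hab
    have := congrArg (expAd K (-x) : L →ₗ[K] L) hab
    have h1 := congrFun (congrArg DFunLike.coe (expAd_leftInv h2 hf hx)) a
    have h2' := congrFun (congrArg DFunLike.coe (expAd_leftInv h2 hf hx)) b
    simp only [LinearMap.comp_apply, LinearMap.id_apply] at h1 h2'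
    rwa [h1, h2'] at this
  · intro a
    refine ⟨(expAd K (-x) : L →ₗ[K] L) a, ?_⟩
    have h1 := congrFun (congrArg DFunLike.coe (expAd_leftInv h2 hf (f₁.neg_mem hx))) a
    simp only [LinearMap.comp_apply, LinearMap.id_apply] at h1
    rwa [neg_neg] at h1

/-- `expAd x` fixes `f₁` pointwise. -/
lemma expAd_fix_f1 (hf : Is3Filtration f₁ f₀) {x : L} (hx : x ∈ f₁) {y : L} (hy : y ∈ f₁) :
    (expAd K x : L →ₗ[K] L) y = y := by
  rw [expAd_apply, hf.2.1 x hx y hy, lie_zero, smul_zero, add_zero, add_zero]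

lemma expAd_mem_f0 (hf : Is3Filtration f₁ f₀) {x : L} (hx : x ∈ f₁) {w : L} (hw : w ∈ f₀) :
    (expAd K x : L →ₗ[K] L) w ∈ f₀ := by
  rw [expAd_apply]
  exact f₀.add_mem (f₀.add_mem hw (hf.1 (hf.2.2.2.1 x hx w hw)))
    (f₀.smul_mem _ (hf.1 (hf.2.2.2.1 x hx _ (lie_mem_f0 hf hx w))))

lemma expAd_map_f0 (h2 : IsUnit (2 : K)) (hf : Is3Filtration f₁ f₀) {x : L} (hx : x ∈ f₁) :
    Submodule.map (expAd K x : L →ₗ[K] L) f₀ = f₀ := by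
  apply le_antisymm
  · rintro _ ⟨w, hw, rfl⟩; exact expAd_mem_f0 hf hx hw
  · intro w hw
    refine ⟨(expAd K (-x) : L →ₗ[K] L) w, expAd_mem_f0 hf (f₁.neg_mem hx) hw, ?_⟩
    have h1 := congrFun (congrArg DFunLike.coe (expAd_leftInv h2 hf (f₁.neg_mem hx))) w
    simp only [LinearMap.comp_apply, LinearMap.id_apply] at h1
    rwa [neg_neg] at h1

lemma expAd_map_f1 (hf : Is3Filtration f₁ f₀) {x : L} (hx : x ∈ f₁) :
    Submodule.map (expAd K x : L →ₗ[K] L) f₁ = f₁ := by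
  apply le_antisymm
  · rintro _ ⟨w, hw, rfl⟩; rw [expAd_fix_f1 hf hx hw]; exact hw
  · intro w hw; exact ⟨w, hw, expAd_fix_f1 hf hx hw⟩

/-- `expAd x` moves an Euler element by `x`. -/
lemma expAd_euler (hf : Is3Filtration f₁ f₀) {x : L} (hx : x ∈ f₁) {E : L}
    (hE : ∀ y ∈ f₁, ⁅E, y⁆ = -y) :
    (expAd K x : L →ₗ[K] L) E = E + x := by
  have h1 : ⁅x, E⁆ = x := by
    have := hE x hx
    rw [← lie_skew, this, neg_neg]
  rw [expAd_apply, h1, hf.2.1 x hx x hx, smul_zero, add_zero]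

/-- transport of IsCompl under expAd when the complement is preserved. -/
lemma map_isCompl {φ : L →ₗ[K] L} (hφ : Function.Bijective φ) {p q : Submodule K L}
    (h : IsCompl p q) : IsCompl (Submodule.map φ p) (Submodule.map φ q) := by
  constructor
  · rw [disjoint_iff, ← Submodule.map_inf φ hφ.injective, disjoint_iff.mp h.disjoint,
      Submodule.map_bot]
  · rw [codisjoint_iff, ← Submodule.map_sup, codisjoint_iff.mp h.codisjoint,
      Submodule.map_top, LinearMap.range_eq_top.mpr hφ.surjective]

end

section grading
variable {K L : Type*} [CommRing K] [LieRing L] [LieAlgebra K L]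
variable {f₁ f₀ e₁ e₀ : Submodule K L} {E : L}

/-- decomposition of `f₀` as `(e₀ ⊓ f₀) + f₁`. -/
lemma f0_decomp (hf1 : f₁ ≤ f₀) (hc : Codisjoint e₀ f₁) {w : L} (hw : w ∈ f₀) :
    ∃ q ∈ e₀ ⊓ f₀, ∃ r ∈ f₁, w = q + r := by
  obtain ⟨u, v, hu, hv, huv⟩ := Submodule.codisjoint_iff_exists_add_eq.mp hc w
  refine ⟨u, ⟨hu, ?_⟩, v, hv, huv.symm⟩
  have h : u = w - v := by rw [← huv]; abel
  rw [h]; exact f₀.sub_mem hw (hf1 hv)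

/-- decomposition of `L` as `e₁ + (e₀ ⊓ f₀) + f₁`. -/
lemma grading_decomp (hf1 : f₁ ≤ f₀) (hc1 : Codisjoint e₁ f₀) (hc0 : Codisjoint e₀ f₁)
    (z : L) : ∃ p ∈ e₁, ∃ q ∈ e₀ ⊓ f₀, ∃ r ∈ f₁, z = p + q + r := by
  obtain ⟨p, w, hp, hw, hpw⟩ := Submodule.codisjoint_iff_exists_add_eq.mp hc1 z
  obtain ⟨q, hq, r, hr, hw'⟩ := f0_decomp hf1 hc0 hw
  exact ⟨p, hp, q, hq, r, hr, by rw [← hpw, hw']; abel⟩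

/-- uniqueness: if a graded sum is zero, all components are zero. -/
lemma grading_zero (hf1 : f₁ ≤ f₀) (hd1 : Disjoint e₁ f₀) (hd0 : Disjoint e₀ f₁)
    {p q r : L} (hp : p ∈ e₁) (hq : q ∈ e₀ ⊓ f₀) (hr : r ∈ f₁)
    (h : p + q + r = 0) : p = 0 ∧ q = 0 ∧ r = 0 := by
  have hp0 : p = 0 := by
    have hpf : p ∈ f₀ := by
      have hp' : p = -(q + r) := by rw [add_assoc] at h; exact eq_neg_of_add_eq_zero_left h
      rw [hp']; exact f₀.neg_mem (f₀.add_mem hq.2 (hf1 hr))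
    exact (Submodule.disjoint_def.mp hd1) p hp hpf
  have hq0 : q = 0 := by
    have hq' : q = -r := by
      rw [hp0, zero_add] at h; exact eq_neg_of_add_eq_zero_left h
    have hqf : q ∈ f₁ := by rw [hq']; exact f₁.neg_mem hr
    exact (Submodule.disjoint_def.mp hd0) q hq.1 hqf
  refine ⟨hp0, hq0, ?_⟩
  rw [hp0, hq0, zero_add, zero_add] at h
  exact h

variable (hE1 : ∀ u ∈ e₁, ⁅E, u⁆ = u) (hE0 : ∀ u ∈ e₀ ⊓ f₀, ⁅E, u⁆ = (0:L))
  (hEm : ∀ u ∈ f₁, ⁅E, u⁆ = -u)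

include hE1 hE0 hEm

/-- the `+1` eigenspace of `ad E` is exactly `e₁`. -/
lemma eig_one (h2 : IsUnit (2:K)) (hf1 : f₁ ≤ f₀) (hc1 : IsCompl e₁ f₀) (hc0 : IsCompl e₀ f₁)
    {u : L} (hu : ⁅E, u⁆ = u) : u ∈ e₁ := by
  obtain ⟨p, hp, q, hq, r, hr, rfl⟩ :=
    grading_decomp hf1 hc1.codisjoint hc0.codisjoint (e₀ := e₀) u
  have hb : ⁅E, p + q + r⁆ = p - r := by
    rw [lie_add, lie_add, hE1 p hp, hE0 q hq, hEm r hr]; abel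
  rw [hb] at hu
  have h0 : (0:L) + q + (r + r) = 0 := by linear_combination (norm := module) -hu
  obtain ⟨-, hq0, hr0⟩ := grading_zero hf1 hc1.disjoint hc0.disjoint e₁.zero_mem hq
    (f₁.add_mem hr hr) h0
  have hr0' : r = 0 := by
    apply unit_smul_cancel h2 (w := r); rw [two_smul]; exact hr0
  rw [hq0, hr0']; simpa using hp

/-- the `0` eigenspace of `ad E` is exactly `e₀ ⊓ f₀`. -/
lemma eig_zero (h2 : IsUnit (2:K)) (hf1 : f₁ ≤ f₀) (hc1 : IsCompl e₁ f₀) (hc0 : IsCompl e₀ f₁)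
    {u : L} (hu : ⁅E, u⁆ = 0) : u ∈ e₀ ⊓ f₀ := by
  obtain ⟨p, hp, q, hq, r, hr, rfl⟩ :=
    grading_decomp hf1 hc1.codisjoint hc0.codisjoint (e₀ := e₀) u
  have hb : ⁅E, p + q + r⁆ = p - r := by
    rw [lie_add, lie_add, hE1 p hp, hE0 q hq, hEm r hr]; abel
  rw [hb] at hu
  have h0 : p + (0:L) + -r = 0 := by linear_combination (norm := module) hu
  obtain ⟨hp0, -, hr0⟩ := grading_zero hf1 hc1.disjoint hc0.disjoint hp
    (Submodule.zero_mem _) (f₁.neg_mem hr) h0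
  have hr0' : r = 0 := by rwa [neg_eq_zero] at hr0
  rw [hp0, hr0']; simpa using hq

/-- the `-1` eigenspace of `ad E` is exactly `f₁`. -/
lemma eig_neg (h2 : IsUnit (2:K)) (hf1 : f₁ ≤ f₀) (hc1 : IsCompl e₁ f₀) (hc0 : IsCompl e₀ f₁)
    {u : L} (hu : ⁅E, u⁆ = -u) : u ∈ f₁ := by
  obtain ⟨p, hp, q, hq, r, hr, rfl⟩ :=
    grading_decomp hf1 hc1.codisjoint hc0.codisjoint (e₀ := e₀) u
  have hb : ⁅E, p + q + r⁆ = p - r := by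
    rw [lie_add, lie_add, hE1 p hp, hE0 q hq, hEm r hr]; abel
  rw [hb] at hu
  have h0 : (p + p) + q + (0:L) = 0 := by linear_combination (norm := module) hu
  obtain ⟨hp0, hq0, -⟩ := grading_zero hf1 hc1.disjoint hc0.disjoint (e₁.add_mem hp hp) hq
    (Submodule.zero_mem _) h0
  have hp0' : p = 0 := by
    apply unit_smul_cancel h2 (w := p); rw [two_smul]; exact hp0
  rw [hp0', hq0]; simpa using hr

/-- the Euler element lies in `e₀ ⊓ f₀`. -/
lemma euler_mem (h2 : IsUnit (2:K)) (hf1 : f₁ ≤ f₀) (hc1 : IsCompl e₁ f₀)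
    (hc0 : IsCompl e₀ f₁) : E ∈ e₀ ⊓ f₀ :=
  eig_zero hE1 hE0 hEm h2 hf1 hc1 hc0 (lie_self E)

end grading

section
variable {K L : Type*} [CommRing K] [LieRing L] [LieAlgebra K L]

lemma compl_eq {P Q R : Submodule K L} (hle : P ≤ Q) (h1 : IsCompl P R) (h2 : IsCompl Q R) :
    P = Q := by
  have hm : (P ⊔ R) ⊓ Q = P ⊔ (R ⊓ Q) := sup_inf_assoc_of_le R hle
  rw [codisjoint_iff.mp h1.codisjoint, top_inf_eq, inf_comm R Q,
    disjoint_iff.mp h2.disjoint, sup_bot_eq] at hm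
  exact hm.symm

end

section key
variable {K L : Type*} [CommRing K] [LieRing L] [LieAlgebra K L]

/-- The key rigidity lemma: if two inner transversal pairs (relative to the same `f`)
have Euler elements differing by an element `b` with `⁅E, b⁆ = 0` and `⁅b, f₁⁆ = 0`,
then the pairs coincide. -/
lemma key_lemma (h2 : IsUnit (2:K)) {f₁ f₀ e₁ e₀ e₁'' e₀'' : Submodule K L}
    (hf : Is3Filtration f₁ f₀) (he : Is3Filtration e₁ e₀) (he'' : Is3Filtration e₁'' e₀'')
    (hc1 : IsCompl e₁ f₀) (hc0 : IsCompl e₀ f₁)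
    (hc1'' : IsCompl e₁'' f₀) (hc0'' : IsCompl e₀'' f₁)
    {E E'' : L}
    (hE1 : ∀ u ∈ e₁, ⁅E, u⁆ = u) (hE0 : ∀ u ∈ e₀ ⊓ f₀, ⁅E, u⁆ = (0:L))
    (hEm : ∀ u ∈ f₁, ⁅E, u⁆ = -u)
    (hE1'' : ∀ u ∈ e₁'', ⁅E'', u⁆ = u) (hE0'' : ∀ u ∈ e₀'' ⊓ f₀, ⁅E'', u⁆ = (0:L))
    (hEm'' : ∀ u ∈ f₁, ⁅E'', u⁆ = -u)
    (hb0 : ⁅E, E'' - E⁆ = 0) (hbf : ∀ y ∈ f₁, ⁅E'' - E, y⁆ = 0) :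
    e₁'' = e₁ ∧ e₀'' = e₀ := by
  set b := E'' - E with hbdef
  have hE''eq : E'' = E + b := by rw [hbdef]; abel
  have hf1 : f₁ ≤ f₀ := hf.1
  have βcomm : ∀ z : L, ⁅E, ⁅b, z⁆⁆ = ⁅b, ⁅E, z⁆⁆ := fun z => by
    rw [leibniz_lie E b z, hb0, zero_lie, zero_add]
  have βe1 : ∀ p ∈ e₁, ⁅b, p⁆ ∈ e₁ := fun p hp => by
    refine eig_one hE1 hE0 hEm h2 hf1 hc1 hc0 ?_
    rw [βcomm, hE1 p hp]
  have βg0 : ∀ q ∈ e₀ ⊓ f₀, ⁅b, q⁆ ∈ e₀ ⊓ f₀ := fun q hq => by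
    refine eig_zero hE1 hE0 hEm h2 hf1 hc1 hc0 ?_
    rw [βcomm, hE0 q hq, lie_zero]
  -- step 1 : e₁'' ≤ e₁
  have step1 : e₁'' ≤ e₁ := by
    intro u hu
    obtain ⟨p, hp, q, hq, r, hr, rfl⟩ :=
      grading_decomp hf1 hc1.codisjoint hc0.codisjoint (e₀ := e₀) u
    have h := hE1'' _ hu
    rw [hE''eq, add_lie, lie_add, lie_add, lie_add, lie_add, hE1 p hp, hE0 q hq, hEm r hr,
      hbf r hr] at h
    -- h : p + 0 + -r + (⁅b,p⁆ + ⁅b,q⁆ + 0) = p + q + r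
    have h0 : ⁅b, p⁆ + (⁅b, q⁆ - q) + -(r + r) = 0 := by
      linear_combination (norm := module) h
    obtain ⟨-, hbq, hrr⟩ := grading_zero hf1 hc1.disjoint hc0.disjoint (βe1 p hp)
      ((e₀ ⊓ f₀).sub_mem (βg0 q hq) hq) (f₁.neg_mem (f₁.add_mem hr hr)) h0
    have hr0 : r = 0 := by
      apply unit_smul_cancel h2 (w := r)
      rw [two_smul, ← neg_eq_zero]; exact hrr
    have hbq' : ⁅b, q⁆ = q := by rwa [sub_eq_zero] at hbq
    have hq1'' : q ∈ e₁'' := by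
      refine eig_one hE1'' hE0'' hEm'' h2 hf1 hc1'' hc0'' ?_
      rw [hE''eq, add_lie, hE0 q hq, hbq', zero_add]
    have hq0 : q = 0 := (Submodule.disjoint_def.mp hc1''.disjoint) q hq1'' hq.2
    rw [hq0, hr0]; simpa using hp
  have he1eq : e₁'' = e₁ := compl_eq step1 hc1'' hc1
  -- step 2 : e₀'' ≤ e₀
  have step2 : e₀'' ≤ e₀ := by
    intro u hu
    obtain ⟨s, w, hs, hw, hsw⟩ := Submodule.codisjoint_iff_exists_add_eq.mp hc1''.codisjoint u
    have hse : s ∈ e₀ := he.1 (he1eq ▸ hs)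
    have hwe : w ∈ e₀'' := by
      have hwus : w = u - s := by rw [← hsw]; abel
      rw [hwus]; exact e₀''.sub_mem hu (he''.1 hs)
    have hw0 : ⁅E'', w⁆ = 0 := hE0'' w ⟨hwe, hw⟩
    obtain ⟨p, hp, q, hq, r, hr, rfl⟩ :=
      grading_decomp hf1 hc1.codisjoint hc0.codisjoint (e₀ := e₀) w
    rw [hE''eq, add_lie, lie_add, lie_add, lie_add, lie_add, hE1 p hp, hE0 q hq, hEm r hr,
      hbf r hr] at hw0
    have h0 : (p + ⁅b, p⁆) + ⁅b, q⁆ + -r = 0 := by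
      linear_combination (norm := module) hw0
    obtain ⟨hpp, -, hrr⟩ := grading_zero hf1 hc1.disjoint hc0.disjoint
      (e₁.add_mem hp (βe1 p hp)) (βg0 q hq) (f₁.neg_mem hr) h0
    have hr0 : r = 0 := by rwa [neg_eq_zero] at hrr
    have hpf : p ∈ f₀ := by
      have : p = (p + q + r) - q - r := by abel
      rw [this]
      exact f₀.sub_mem (f₀.sub_mem hw hq.2) (hf1 hr)
    have hp0 : p = 0 := (Submodule.disjoint_def.mp hc1.disjoint) p hp hpf
    have : s + (p + q + r) ∈ e₀ := by
      rw [hp0, hr0]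
      exact e₀.add_mem hse (by simpa using hq.1)
    rwa [hsw] at this
  exact ⟨he1eq, compl_eq step2 hc0'' hc0⟩

end key

section transport
variable {K L : Type*} [CommRing K] [LieRing L] [LieAlgebra K L]

/-- transport of an inner transversal pair along `expAd x`, `x ∈ f₁`. -/
lemma transport (h2 : IsUnit (2:K)) (h3 : IsUnit (3:K)) {f₁ f₀ e₁ e₀ : Submodule K L}
    (hf : Is3Filtration f₁ f₀) (he : Is3Filtration e₁ e₀)
    (hc1 : IsCompl e₁ f₀) (hc0 : IsCompl e₀ f₁) {x : L} (hx : x ∈ f₁)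
    {E : L} (hE1 : ∀ u ∈ e₁, ⁅E, u⁆ = u) (hE0 : ∀ u ∈ e₀ ⊓ f₀, ⁅E, u⁆ = (0:L))
    (hEm : ∀ u ∈ f₁, ⁅E, u⁆ = -u) :
    Is3Filtration (Submodule.map (expAd K x : L →ₗ[K] L) e₁)
        (Submodule.map (expAd K x : L →ₗ[K] L) e₀) ∧
      IsCompl (Submodule.map (expAd K x : L →ₗ[K] L) e₁) f₀ ∧
      IsCompl (Submodule.map (expAd K x : L →ₗ[K] L) e₀) f₁ ∧
      (∀ u ∈ Submodule.map (expAd K x : L →ₗ[K] L) e₁, ⁅E + x, u⁆ = u) ∧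
      (∀ u ∈ Submodule.map (expAd K x : L →ₗ[K] L) e₀ ⊓ f₀, ⁅E + x, u⁆ = (0:L)) ∧
      (∀ u ∈ f₁, ⁅E + x, u⁆ = -u) := by
  set φ := (expAd K x : L →ₗ[K] L) with hφ
  have hbij : Function.Bijective φ := expAd_bijective h2 hf hx
  have hlie : ∀ a b : L, φ ⁅a, b⁆ = ⁅φ a, φ b⁆ := expAd_lie h2 h3 hf hx
  have hφE : φ E = E + x := expAd_euler hf hx hEm
  refine ⟨⟨Submodule.map_mono he.1, ?_, ?_, ?_, ?_⟩, ?_, ?_, ?_, ?_, ?_⟩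
  · rintro _ ⟨a, ha, rfl⟩ _ ⟨b, hb, rfl⟩
    rw [← hlie, he.2.1 a ha b hb, map_zero]
  · rintro _ ⟨a, ha, rfl⟩ _ ⟨b, hb, rfl⟩
    rw [← hlie]; exact ⟨_, he.2.2.1 a ha b hb, rfl⟩
  · rintro _ ⟨a, ha, rfl⟩ _ ⟨b, hb, rfl⟩
    rw [← hlie]; exact ⟨_, he.2.2.2.1 a ha b hb, rfl⟩
  · rintro z _ ⟨b, hb, rfl⟩
    obtain ⟨z', rfl⟩ := hbij.surjective z
    rw [← hlie]; exact ⟨_, he.2.2.2.2 z' b hb, rfl⟩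
  · have h := map_isCompl hbij hc1
    rwa [expAd_map_f0 h2 hf hx] at h
  · have h := map_isCompl hbij hc0
    rwa [expAd_map_f1 hf hx] at h
  · rintro _ ⟨u, hu, rfl⟩
    rw [← hφE, ← hlie, hE1 u hu]
  · rintro u ⟨hu1, hu2⟩
    have hmem : u ∈ Submodule.map φ (e₀ ⊓ f₀) := by
      rw [Submodule.map_inf _ hbij.injective, expAd_map_f0 h2 hf hx]
      exact ⟨hu1, hu2⟩
    obtain ⟨u', hu', rfl⟩ := hmem
    rw [← hφE, ← hlie, hE0 u' hu', map_zero]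
  · intro y hy
    rw [add_lie, hEm y hy, hf.2.1 x hx y hy, add_zero]

end transport

/-- The vector group `f₁` acts simply transitively on the set of inner 3-filtrations
transversal to `f`: given inner transversal pairs `(e, f)` and `(e', f)`, there is a
unique `x ∈ f₁` with `e^{ad x} (e₁) = e₁'` and `e^{ad x} (e₀) = e₀'`. -/
theorem inner_three_filtrations_simply_transitive
    {K L : Type*} [CommRing K] [LieRing L] [LieAlgebra K L]
    (h2 : IsUnit (2 : K)) (h3 : IsUnit (3 : K))
    (f₁ f₀ e₁ e₀ e₁' e₀' : Submodule K L)
    (hf : Is3Filtration f₁ f₀) (he : Is3Filtration e₁ e₀) (he' : Is3Filtration e₁' e₀')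
    (htr : Transversal3 e₁ e₀ f₁ f₀) (hin : InnerPair3 e₁ e₀ f₁ f₀)
    (htr' : Transversal3 e₁' e₀' f₁ f₀) (hin' : InnerPair3 e₁' e₀' f₁ f₀) :
    ∃! x : L, x ∈ f₁ ∧
      Submodule.map (expAd K x : L →ₗ[K] L) e₁ = e₁' ∧
      Submodule.map (expAd K x : L →ₗ[K] L) e₀ = e₀' := by
  obtain ⟨hc1, hc0⟩ := htr
  obtain ⟨hc1', hc0'⟩ := htr'
  obtain ⟨E, hE1, hE0, hEm⟩ := hin
  obtain ⟨E', hE1', hE0', hEm'⟩ := hin'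
  have hEmem : E ∈ e₀ ⊓ f₀ := euler_mem hE1 hE0 hEm h2 hf.1 hc1 hc0
  have hEmem' : E' ∈ e₀' ⊓ f₀ := euler_mem hE1' hE0' hEm' h2 hf.1 hc1' hc0'
  -- decompose E' - E
  obtain ⟨b₀, hb₀, c, hcf, hbc⟩ :=
    f0_decomp (e₀ := e₀) hf.1 hc0.codisjoint (f₀.sub_mem hEmem'.2 hEmem.2)
  -- b₀ centralizes f₁
  have hbf : ∀ y ∈ f₁, ⁅b₀, y⁆ = 0 := by
    intro y hy
    have hEE : ⁅E' - E, y⁆ = 0 := by rw [sub_lie, hEm' y hy, hEm y hy, sub_self]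
    rw [hbc, add_lie, hf.2.1 c hcf y hy, add_zero] at hEE
    exact hEE
  have hmc : -c ∈ f₁ := f₁.neg_mem hcf
  -- transport e' by expAd (-c)
  obtain ⟨he'', hc1'', hc0'', hE1'', hE0'', hEm''⟩ :=
    transport h2 h3 hf he' hc1' hc0' hmc hE1' hE0' hEm'
  -- apply the key lemma
  have hEdiff : (E' + -c) - E = b₀ := by linear_combination (norm := module) hbc
  have hkey := key_lemma h2 hf he he'' hc1 hc0 hc1'' hc0'' hE1 hE0 hEm hE1'' hE0'' hEm''
    (by rw [hEdiff]; exact hE0 b₀ hb₀) (by intro y hy; rw [hEdiff]; exact hbf y hy)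
  -- existence
  have hmap1 : Submodule.map (expAd K c : L →ₗ[K] L) e₁ = e₁' := by
    rw [← hkey.1, ← Submodule.map_comp, expAd_comp h2 hf hcf hmc, add_neg_cancel,
      expAd_zero, Submodule.map_id]
  have hmap0 : Submodule.map (expAd K c : L →ₗ[K] L) e₀ = e₀' := by
    rw [← hkey.2, ← Submodule.map_comp, expAd_comp h2 hf hcf hmc, add_neg_cancel,
      expAd_zero, Submodule.map_id]
  refine ⟨c, ⟨hcf, hmap1, hmap0⟩, ?_⟩
  rintro y ⟨hy1, -, hy3⟩
  have hyE : E + y ∈ e₀' := by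
    rw [← hy3]
    exact ⟨E, hEmem.1, expAd_euler hf hy1 hEm⟩
  have hcE : E + c ∈ e₀' := by
    rw [← hmap0]
    exact ⟨E, hEmem.1, expAd_euler hf hcf hEm⟩
  have hsub : y - c ∈ e₀' := by
    have h : y - c = (E + y) - (E + c) := by abel
    rw [h]; exact e₀'.sub_mem hyE hcE
  have h0 : y - c = 0 :=
    (Submodule.disjoint_def.mp hc0'.disjoint) _ hsub (f₁.sub_mem hy1 hcf)
  rw [sub_eq_zero] at h0
  exact h0
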